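/- Let G be a finite simple graph with minimum cycle length greater than 6 (G contains no cycle of length at most 6), and let H be the hybrid graph of G: distinct vertices are adjacent in H iff they are adjacent in G or have a common neighbor in G. Suppose i and j are adjacent in H. Then the following are equivalent: (a) there exist vertices k and l with k ≠ l, k ∉ {i,j}, l ∉ {i,j}, such that k and l are each adjacent in H to both i and j, and k and l are not adjacent in H; (b) i and j are adjacent in G and both i and j have degree at least 2 in G. -/

import Mathlib

open Matrix

/-- The hybrid graph of `G`: distinct vertices are adjacent iff they are adjacent in `G`
or have a common neighbor in `G`. -/
def hybrid {V : Type*} (G : SimpleGraph V) : SimpleGraph V where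
  Adj i j := i ≠ j ∧ (G.Adj i j ∨ ∃ k, G.Adj i k ∧ G.Adj k j)
  symm := by
    constructor
    rintro i j ⟨hne, h | ⟨k, h1, h2⟩⟩
    · exact ⟨hne.symm, Or.inl h.symm⟩
    · exact ⟨hne.symm, Or.inr ⟨k, h2.symm, h1.symm⟩⟩
  loopless := by
    constructor
    rintro i ⟨hne, -⟩
    exact hne rfl

section Aux

open SimpleGraph

variable {V : Type*} {G : SimpleGraph V}

lemma hybrid_adj {i j : V} :
    (hybrid G).Adj i j ↔ i ≠ j ∧ (G.Adj i j ∨ ∃ k, G.Adj i k ∧ G.Adj k j) := Iff.rfl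

lemma my_girth_le_length {a : V} {w : G.Walk a a} (hw : w.IsCycle) :
    G.girth ≤ w.length := by
  have h : G.egirth ≤ (w.length : ℕ∞) := le_egirth.mp le_rfl a w hw
  have := ENat.toNat_le_toNat h (by simp)
  simpa [girth] using this

lemma noC3 (hg : 6 < G.girth) {a b c : V} (hab : G.Adj a b) (hbc : G.Adj b c)
    (hca : G.Adj c a) : False := by
  have hcyc : (Walk.cons hab (Walk.cons hbc (Walk.cons hca Walk.nil))).IsCycle := by
    simp [Walk.isCycle_def, Walk.isTrail_def, hab.ne, hbc.ne, hca.ne, hab.ne',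
      hbc.ne', hca.ne']
  have := my_girth_le_length hcyc
  simp at this
  omega

lemma noC4 (hg : 6 < G.girth) {a b c d : V} (hac : a ≠ c) (hbd : b ≠ d)
    (hab : G.Adj a b) (hbc : G.Adj b c) (hcd : G.Adj c d) (hda : G.Adj d a) : False := by
  have hcyc : (Walk.cons hab (Walk.cons hbc (Walk.cons hcd (Walk.cons hda Walk.nil)))).IsCycle := by
    simp [Walk.isCycle_def, Walk.isTrail_def, hab.ne, hbc.ne, hcd.ne, hda.ne, hab.ne',
      hbc.ne', hcd.ne', hda.ne', hac, hbd, hac.symm, hbd.symm]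
  have := my_girth_le_length hcyc
  simp at this
  omega

lemma noC5 (hg : 6 < G.girth) {a b c d e : V} (hac : a ≠ c) (had : a ≠ d) (hbd : b ≠ d)
    (hbe : b ≠ e) (hce : c ≠ e)
    (hab : G.Adj a b) (hbc : G.Adj b c) (hcd : G.Adj c d) (hde : G.Adj d e)
    (hea : G.Adj e a) : False := by
  have hcyc : (Walk.cons hab (Walk.cons hbc (Walk.cons hcd (Walk.cons hde
      (Walk.cons hea Walk.nil))))).IsCycle := by
    simp [Walk.isCycle_def, Walk.isTrail_def, hab.ne, hbc.ne, hcd.ne, hde.ne, hea.ne,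
      hab.ne', hbc.ne', hcd.ne', hde.ne', hea.ne',
      hac, had, hbd, hbe, hce, hac.symm, had.symm, hbd.symm, hbe.symm, hce.symm]
  have := my_girth_le_length hcyc
  simp at this
  omega

lemma noC6 (hg : 6 < G.girth) {a b c d e f : V} (hac : a ≠ c) (had : a ≠ d) (hae : a ≠ e)
    (hbd : b ≠ d) (hbe : b ≠ e) (hbf : b ≠ f) (hce : c ≠ e) (hcf : c ≠ f) (hdf : d ≠ f)
    (hab : G.Adj a b) (hbc : G.Adj b c) (hcd : G.Adj c d) (hde : G.Adj d e)
    (hef : G.Adj e f) (hfa : G.Adj f a) : False := by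
  have hcyc : (Walk.cons hab (Walk.cons hbc (Walk.cons hcd (Walk.cons hde
      (Walk.cons hef (Walk.cons hfa Walk.nil)))))).IsCycle := by
    simp [Walk.isCycle_def, Walk.isTrail_def, hab.ne, hbc.ne, hcd.ne, hde.ne, hef.ne, hfa.ne,
      hab.ne', hbc.ne', hcd.ne', hde.ne', hef.ne', hfa.ne',
      hac, had, hae, hbd, hbe, hbf, hce, hcf, hdf,
      hac.symm, had.symm, hae.symm, hbd.symm, hbe.symm, hbf.symm, hce.symm, hcf.symm, hdf.symm]
  have := my_girth_le_length hcyc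
  simp at this
  omega

lemma two_le_degree [Fintype V] [DecidableRel G.Adj] {i x y : V} (hxy : x ≠ y)
    (hx : G.Adj i x) (hy : G.Adj i y) : 2 ≤ G.degree i := by
  classical
  have h : ({x, y} : Finset V) ⊆ G.neighborFinset i := by
    simp [Finset.insert_subset_iff, hx, hy]
  have hc : ({x, y} : Finset V).card = 2 := by
    rw [Finset.card_insert_of_notMem (by simpa using hxy), Finset.card_singleton]
  calc 2 = ({x, y} : Finset V).card := hc.symm
    _ ≤ (G.neighborFinset i).card := Finset.card_le_card h
    _ = G.degree i := rfl

end Aux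

/-- Theorem 2 of the paper: in a graph of girth greater than 6, an edge `(i,j)`
of the hybrid graph is a true edge between non-leaf nodes iff there exist `k, l` adjacent (in
the hybrid graph) to both `i` and `j` but not to each other. -/
theorem stmt3 {V : Type*} [Fintype V] (G : SimpleGraph V) [DecidableRel G.Adj]
    (hgirth : 6 < G.girth) (i j : V) (hij : (hybrid G).Adj i j) :
    (∃ k l : V, k ≠ l ∧ k ≠ i ∧ k ≠ j ∧ l ≠ i ∧ l ≠ j ∧
        (hybrid G).Adj k i ∧ (hybrid G).Adj k j ∧
        (hybrid G).Adj l i ∧ (hybrid G).Adj l j ∧ ¬ (hybrid G).Adj k l) ↔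
      (G.Adj i j ∧ 2 ≤ G.degree i ∧ 2 ≤ G.degree j) := by
  have hgne : i ≠ j := hij.1
  constructor
  · rintro ⟨k, l, hkl, hki, hkj, hli, hlj, hybki, hybkj, hybli, hyblj, hnkl⟩
    -- Step 1: G.Adj i j
    have hGij : G.Adj i j := by
      by_contra hnij
      obtain ⟨m, him, hmj⟩ : ∃ m, G.Adj i m ∧ G.Adj m j := by
        rcases hij.2 with h | h
        · exact absurd h hnij
        · exact h
      -- every hybrid common neighbor x of i and j is m or adjacent to m
      have key : ∀ x : V, x ≠ i → x ≠ j → (hybrid G).Adj x i → (hybrid G).Adj x j →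
          x = m ∨ G.Adj x m := by
        intro x hxi hxj hybxi hybxj
        by_cases hA : G.Adj x i <;> by_cases hB : G.Adj x j
        · left
          by_contra hxm
          exact noC4 hgirth hgne hxm hA.symm hB hmj.symm him.symm
        · obtain ⟨p, hxp, hpj⟩ : ∃ p, G.Adj x p ∧ G.Adj p j := by
            rcases hybxj.2 with h | h
            · exact absurd h hB
            · exact h
          exfalso
          have hip : i ≠ p := fun h => hnij (h ▸ hpj)
          have hxm : x ≠ m := fun h => hB (h ▸ hmj)
          have hpm : p ≠ m := by
            intro h
            exact noC3 hgirth hA.symm (h ▸ hxp) him.symm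
          exact noC5 hgirth hip hgne hxj hxm hpm hA.symm hxp hpj hmj.symm him.symm
        · obtain ⟨n, hxn, hni⟩ : ∃ n, G.Adj x n ∧ G.Adj n i := by
            rcases hybxi.2 with h | h
            · exact absurd h hA
            · exact h
          exfalso
          have hjn : j ≠ n := fun h => hnij ((h ▸ hni).symm)
          have hxm : x ≠ m := fun h => hA (h ▸ him.symm)
          have hnm : n ≠ m := by
            intro h
            exact noC3 hgirth hB.symm (h ▸ hxn) hmj
          exact noC5 hgirth hjn hgne.symm hxi hxm hnm hB.symm hxn hni him hmj
        · obtain ⟨n, hxn, hni⟩ : ∃ n, G.Adj x n ∧ G.Adj n i := by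
            rcases hybxi.2 with h | h
            · exact absurd h hA
            · exact h
          obtain ⟨p, hxp, hpj⟩ : ∃ p, G.Adj x p ∧ G.Adj p j := by
            rcases hybxj.2 with h | h
            · exact absurd h hB
            · exact h
          by_cases hnm : n = m
          · exact Or.inr (hnm ▸ hxn)
          by_cases hpm : p = m
          · exact Or.inr (hpm ▸ hxp)
          exfalso
          have hip : i ≠ p := fun h => hnij (h ▸ hpj)
          have hjn : j ≠ n := fun h => hnij ((h ▸ hni).symm)
          have hxm : x ≠ m := fun h => hA (h ▸ him.symm)
          by_cases hnp : n = p
          · exact noC4 hgirth hgne hnm hni.symm (hnp ▸ hpj) hmj.symm him.symm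
          · exact noC6 hgirth hxi.symm hip hgne hnp hjn.symm hnm hxj hxm hpm
              hni.symm hxn.symm hxp hpj hmj.symm him.symm
      rcases key k hki hkj hybki hybkj with hk | hk <;>
        rcases key l hli hlj hybli hyblj with hl | hl
      · exact hkl (hk.trans hl.symm)
      · exact hnkl ⟨hkl, Or.inl (hk ▸ hl.symm)⟩
      · exact hnkl ⟨hkl, Or.inl (hl ▸ hk)⟩
      · exact hnkl ⟨hkl, Or.inr ⟨m, hk, hl.symm⟩⟩
    refine ⟨hGij, ?_, ?_⟩
    · -- degree i ≥ 2 : find a neighbor of i other than j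
      obtain ⟨x, hix, hxj⟩ : ∃ x, G.Adj i x ∧ x ≠ j := by
        rcases hybki.2 with h | ⟨n, hkn, hni⟩
        · exact ⟨k, h.symm, hkj⟩
        · by_cases hnj : n = j
          · rcases hybli.2 with h' | ⟨p, hlp, hpi⟩
            · exact ⟨l, h'.symm, hlj⟩
            · by_cases hpj : p = j
              · exact absurd ⟨hkl, Or.inr ⟨j, hnj ▸ hkn, (hpj ▸ hlp).symm⟩⟩ hnkl
              · exact ⟨p, hpi.symm, hpj⟩
          · exact ⟨n, hni.symm, hnj⟩
      exact two_le_degree (Ne.symm hxj) hGij hix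
    · -- degree j ≥ 2 : find a neighbor of j other than i
      obtain ⟨y, hjy, hyi⟩ : ∃ y, G.Adj j y ∧ y ≠ i := by
        rcases hybkj.2 with h | ⟨p, hkp, hpj⟩
        · exact ⟨k, h.symm, hki⟩
        · by_cases hpi : p = i
          · rcases hyblj.2 with h' | ⟨q, hlq, hqj⟩
            · exact ⟨l, h'.symm, hli⟩
            · by_cases hqi : q = i
              · exact absurd ⟨hkl, Or.inr ⟨i, hpi ▸ hkp, (hqi ▸ hlq).symm⟩⟩ hnkl
              · exact ⟨q, hqj.symm, hqi⟩
          · exact ⟨p, hpj.symm, hpi⟩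
      exact two_le_degree (Ne.symm hyi) hGij.symm hjy
  · rintro ⟨hGij, hdi, hdj⟩
    obtain ⟨k, hk, hkj⟩ := Finset.exists_mem_ne
      (s := G.neighborFinset i) (by rw [G.card_neighborFinset_eq_degree]; omega) j
    obtain ⟨l, hl, hli⟩ := Finset.exists_mem_ne
      (s := G.neighborFinset j) (by rw [G.card_neighborFinset_eq_degree]; omega) i
    rw [SimpleGraph.mem_neighborFinset] at hk hl
    have hki : k ≠ i := hk.ne'
    have hlj : l ≠ j := hl.ne'
    have hkl : k ≠ l := by
      intro h
      exact noC3 hgirth hGij (h ▸ hl) hk.symm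
    refine ⟨k, l, hkl, hki, hkj, hli, hlj,
      ⟨hki, Or.inl hk.symm⟩, ⟨hkj, Or.inr ⟨i, hk.symm, hGij⟩⟩,
      ⟨hli, Or.inr ⟨j, hl.symm, hGij.symm⟩⟩, ⟨hlj, Or.inl hl.symm⟩, ?_⟩
    rintro ⟨-, hadj | ⟨m, hkm, hml⟩⟩
    · exact noC4 hgirth (Ne.symm hli) hkj hk hadj hl.symm hGij.symm
    · have him : i ≠ m := by
        intro h
        exact noC3 hgirth (h ▸ hml) hl.symm hGij.symm
      have hmj : m ≠ j := by
        intro h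
        exact noC3 hgirth hk (h ▸ hkm) hGij.symm
      exact noC5 hgirth him (Ne.symm hli) hkl hkj hmj hk hkm hml hl.symm hGij.symm
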